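/- For every tree T on n vertices, the number of dependent (non-independent) vertex subsets of even size differs from the number of dependent subsets of odd size by at most one. -/

import Mathlib

open Finset

namespace TreeDepAux

variable {V : Type*} [Fintype V] [DecidableEq V] (T : SimpleGraph V) [DecidableRel T.Adj]

/-- Independent subsets of `A`. -/
def indepF (A : Finset V) : Finset (Finset V) :=
  A.powerset.filter (fun s => ∀ u ∈ s, ∀ v ∈ s, ¬ T.Adj u v)

/-- Signed count of independent subsets of `A`. -/
def fA (A : Finset V) : ℤ := ∑ s ∈ indepF T A, (-1) ^ s.card

lemma fA_empty : fA T ∅ = 1 := by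
  simp [fA, indepF, Finset.filter_singleton]

variable {T}

lemma fA_rec {A : Finset V} {u : V} (hu : u ∈ A) :
    fA T A = fA T (A.erase u) - fA T ((A.erase u).filter (fun x => ¬ T.Adj u x)) := by
  classical
  set B := (A.erase u).filter (fun x => ¬ T.Adj u x) with hB
  have hsplit : fA T A =
      (∑ s ∈ (indepF T A).filter (fun s => u ∉ s), (-1 : ℤ) ^ s.card) +
      (∑ s ∈ (indepF T A).filter (fun s => u ∈ s), (-1 : ℤ) ^ s.card) := by
    rw [fA, ← Finset.sum_filter_add_sum_filter_not (indepF T A) (fun s => u ∉ s)]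
    simp
  have h1 : (indepF T A).filter (fun s => u ∉ s) = indepF T (A.erase u) := by
    ext s
    simp only [indepF, mem_filter, mem_powerset]
    constructor
    · rintro ⟨⟨hsA, hind⟩, hus⟩
      exact ⟨subset_erase.2 ⟨hsA, hus⟩, hind⟩
    · rintro ⟨hsA, hind⟩
      have := subset_erase.1 hsA
      exact ⟨⟨this.1, hind⟩, this.2⟩
  have h2 : (∑ s ∈ (indepF T A).filter (fun s => u ∈ s), (-1 : ℤ) ^ s.card)
      = - fA T B := by
    rw [fA, ← Finset.sum_neg_distrib]
    refine Finset.sum_bij' (fun s _ => s.erase u) (fun t _ => insert u t) ?_ ?_ ?_ ?_ ?_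
    · intro s hs
      simp only [indepF, mem_filter, mem_powerset] at hs ⊢
      obtain ⟨⟨hsA, hind⟩, hus⟩ := hs
      refine ⟨?_, fun a ha b hb => hind a (mem_of_mem_erase ha) b (mem_of_mem_erase hb)⟩
      intro x hx
      have hxs : x ∈ s := mem_of_mem_erase hx
      have hxu : x ≠ u := ne_of_mem_erase hx
      simp only [hB, mem_filter, mem_erase]
      exact ⟨⟨hxu, hsA hxs⟩, hind u hus x hxs⟩
    · intro t ht
      simp only [indepF, mem_filter, mem_powerset] at ht ⊢
      obtain ⟨htB, hind⟩ := ht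
      have htA : ∀ x ∈ t, x ∈ A.erase u := fun x hx => (mem_filter.1 (htB hx)).1
      have hut : u ∉ t := fun h => (mem_erase.1 (htA u h)).1 rfl
      refine ⟨⟨?_, ?_⟩, mem_insert_self u t⟩
      · intro x hx
        rcases mem_insert.1 hx with rfl | hx
        · exact hu
        · exact mem_of_mem_erase (htA x hx)
      · intro a ha b hb
        rcases mem_insert.1 ha with ha' | ha'
        · rcases mem_insert.1 hb with hb' | hb'
          · rw [ha', hb']; exact T.loopless.irrefl u
          · rw [ha']; exact (mem_filter.1 (htB hb')).2
        · rcases mem_insert.1 hb with hb' | hb'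
          · rw [hb']; intro h; exact (mem_filter.1 (htB ha')).2 h.symm
          · exact hind a ha' b hb'
    · intro s hs
      simp only [mem_filter] at hs
      exact insert_erase hs.2
    · intro t ht
      simp only [indepF, mem_filter, mem_powerset] at ht
      have hut : u ∉ t := by
        intro h
        have := ht.1 h
        simp [hB, mem_filter, mem_erase] at this
      exact erase_insert hut
    · intro s hs
      simp only [mem_filter] at hs
      obtain ⟨m, hm⟩ : ∃ m, s.card = m + 1 :=
        ⟨s.card - 1, by have : 0 < s.card := card_pos.2 ⟨u, hs.2⟩; omega⟩
      rw [Finset.card_erase_of_mem hs.2, hm]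
      have h1 : m + 1 - 1 = m := rfl
      rw [h1, pow_succ]
      ring
  rw [hsplit, h1, h2]
  show fA T (A.erase u) + - fA T B = fA T (A.erase u) - fA T B
  ring

lemma fA_isolated {A : Finset V} {v : V} (hv : v ∈ A) (hiso : ∀ x ∈ A, ¬ T.Adj v x) :
    fA T A = 0 := by
  rw [fA_rec hv]
  have : (A.erase v).filter (fun x => ¬ T.Adj v x) = A.erase v := by
    apply Finset.filter_true_of_mem
    intro x hx
    exact hiso x (mem_of_mem_erase hx)
  rw [this]
  ring

lemma getVert_one_takeUntil {v x w : V} (p : T.Walk v x) (hw : w ∈ p.support)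
    (hne : v ≠ w) : (p.takeUntil w hw).getVert 1 = p.getVert 1 := by
  cases p with
  | nil => simp at hw; exact absurd hw.symm hne
  | cons r q =>
    rw [SimpleGraph.Walk.takeUntil]
    rw [dif_neg hne]
    simp [SimpleGraph.Walk.getVert_cons_succ, SimpleGraph.Walk.getVert_zero]

lemma exists_leaf (hacyc : T.IsAcyclic) {A : Finset V} (hA : A.Nonempty)
    (hdeg : ∀ w ∈ A, ∃ x ∈ A, T.Adj w x) :
    ∃ v ∈ A, ∃ u ∈ A, T.Adj v u ∧ ∀ x ∈ A, T.Adj v x → x = u := by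
  classical
  obtain ⟨a0, ha0⟩ := hA
  obtain ⟨b0, hb0, hab0⟩ := hdeg a0 ha0
  have : Nonempty V := ⟨a0⟩
  set P : ℕ → Prop := fun n => ∃ (a v : V) (p : T.Walk a v),
      p.IsPath ∧ (∀ x ∈ p.support, x ∈ A) ∧ p.length = n with hP
  have hP1 : P 1 := by
    refine ⟨a0, b0, SimpleGraph.Walk.cons hab0 SimpleGraph.Walk.nil, ?_, ?_, rfl⟩
    · rw [SimpleGraph.Walk.cons_isPath_iff]
      exact ⟨SimpleGraph.Walk.IsPath.nil, by simp [hab0.ne]⟩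
    · intro x hx
      simp [SimpleGraph.Walk.support_cons] at hx
      rcases hx with rfl | rfl
      · exact ha0
      · exact hb0
  have hcard : 1 ≤ Fintype.card V := Fintype.card_pos
  set n := Nat.findGreatest P (Fintype.card V) with hn
  have hn1 : 1 ≤ n := Nat.le_findGreatest hcard hP1
  have hPn : P n := Nat.findGreatest_spec hcard hP1
  obtain ⟨a, v, p, hp, hsupp, hlen⟩ := hPn
  have hlenpos : 0 < p.length := by omega
  refine ⟨a, hsupp a p.start_mem_support, p.getVert 1, ?_, ?_, ?_⟩
  · apply hsupp
    rw [SimpleGraph.Walk.mem_support_iff_exists_getVert]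
    exact ⟨1, rfl, by omega⟩
  · simpa using p.adj_getVert_succ (i := 0) hlenpos
  · intro x hxA hadj
    by_cases hxs : x ∈ p.support
    · -- compare the one-edge path with the prefix of p
      have hq1 : (p.takeUntil x hxs).IsPath := hp.takeUntil hxs
      have hq2 : (SimpleGraph.Walk.cons hadj (SimpleGraph.Walk.nil)).IsPath := by
        rw [SimpleGraph.Walk.cons_isPath_iff]
        exact ⟨SimpleGraph.Walk.IsPath.nil, by simp [hadj.ne]⟩
      have := hacyc.path_unique ⟨p.takeUntil x hxs, hq1⟩ ⟨_, hq2⟩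
      have heq : p.takeUntil x hxs = SimpleGraph.Walk.cons hadj SimpleGraph.Walk.nil := by
        exact congrArg Subtype.val this
      have h1 : (p.takeUntil x hxs).getVert 1 = x := by rw [heq]; rfl
      rw [getVert_one_takeUntil p hxs hadj.ne] at h1
      exact h1.symm
    · exfalso
      have hq : (SimpleGraph.Walk.cons hadj.symm p).IsPath := by
        rw [SimpleGraph.Walk.cons_isPath_iff]
        exact ⟨hp, hxs⟩
      have hlt : p.length + 1 < Fintype.card V := by
        have := hq.length_lt
        simpa [SimpleGraph.Walk.length_cons] using this
      refine Nat.findGreatest_is_greatest (P := P) (n := Fintype.card V) (k := n + 1)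
        (by omega) (by omega) ?_
      refine ⟨x, v, SimpleGraph.Walk.cons hadj.symm p, hq, ?_,
        by simp [SimpleGraph.Walk.length_cons, hlen]⟩
      intro y hy
      simp [SimpleGraph.Walk.support_cons] at hy
      rcases hy with rfl | hy
      · exact hxA
      · exact hsupp y hy

lemma abs_fA_le (hacyc : T.IsAcyclic) (A : Finset V) : |fA T A| ≤ 1 := by
  classical
  induction A using Finset.strongInduction with
  | _ A ih =>
    rcases A.eq_empty_or_nonempty with rfl | hA
    · rw [fA_empty]; norm_num
    by_cases hiso : ∃ v ∈ A, ∀ x ∈ A, ¬ T.Adj v x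
    · obtain ⟨v, hv, hvi⟩ := hiso
      rw [fA_isolated hv hvi]; norm_num
    push_neg at hiso
    have hdeg : ∀ w ∈ A, ∃ x ∈ A, T.Adj w x := hiso
    obtain ⟨v, hv, u, hu, hadj, huniq⟩ := exists_leaf hacyc hA hdeg
    have hvu : v ≠ u := hadj.ne
    have hrec := fA_rec (T := T) hu
    have hv' : v ∈ A.erase u := mem_erase.2 ⟨hvu, hv⟩
    have hz : fA T (A.erase u) = 0 := by
      apply fA_isolated hv'
      intro x hx hxadj
      have := huniq x (mem_of_mem_erase hx) hxadj
      exact (mem_erase.1 hx).1 this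
    rw [hrec, hz, zero_sub, abs_neg]
    apply ih
    exact Finset.ssubset_of_subset_of_ssubset (Finset.filter_subset _ _)
      (Finset.erase_ssubset hu)

end TreeDepAux

open Classical in
theorem tree_dependent_sets_balance {V : Type*} [Fintype V] (T : SimpleGraph V)
    (hconn : T.Connected) (hacyc : T.IsAcyclic) :
    |((Finset.univ.filter fun s : Finset V =>
          ¬(∀ u ∈ s, ∀ v ∈ s, ¬ T.Adj u v) ∧ Even s.card).card : ℤ) -
      ((Finset.univ.filter fun s : Finset V =>
          ¬(∀ u ∈ s, ∀ v ∈ s, ¬ T.Adj u v) ∧ Odd s.card).card : ℤ)| ≤ 1 := by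
  classical
  have hne : Nonempty V := hconn.nonempty
  set indep : Finset V → Prop := fun s => ∀ u ∈ s, ∀ v ∈ s, ¬ T.Adj u v with hindep
  have htot : ∑ s ∈ (Finset.univ : Finset V).powerset, (-1 : ℤ) ^ s.card = 0 :=
    Finset.sum_powerset_neg_one_pow_card_of_nonempty Finset.univ_nonempty
  have hsplit : ∑ s ∈ (Finset.univ : Finset V).powerset, (-1 : ℤ) ^ s.card
      = TreeDepAux.fA T Finset.univ
        + ∑ s ∈ (Finset.univ : Finset V).powerset.filter (fun s => ¬ indep s),
            (-1 : ℤ) ^ s.card := by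
    rw [TreeDepAux.fA, TreeDepAux.indepF]
    rw [← Finset.sum_filter_add_sum_filter_not ((Finset.univ : Finset V).powerset)
      (fun s => indep s)]
  set D := (Finset.univ : Finset V).powerset.filter (fun s => ¬ indep s) with hD
  have hDsum : ∑ s ∈ D, (-1 : ℤ) ^ s.card
      = ((D.filter (fun s => Even s.card)).card : ℤ)
        - ((D.filter (fun s => Odd s.card)).card : ℤ) := by
    rw [← Finset.sum_filter_add_sum_filter_not D (fun s => Even s.card)]
    have h1 : ∑ s ∈ D.filter (fun s => Even s.card), (-1 : ℤ) ^ s.card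
        = ((D.filter (fun s => Even s.card)).card : ℤ) := by
      rw [Finset.sum_congr rfl (fun s hs => (Finset.mem_filter.1 hs).2.neg_one_pow)]
      simp
    have h2 : ∑ s ∈ D.filter (fun s => ¬ Even s.card), (-1 : ℤ) ^ s.card
        = -((D.filter (fun s => Odd s.card)).card : ℤ) := by
      have : D.filter (fun s => ¬ Even s.card) = D.filter (fun s => Odd s.card) := by
        apply Finset.filter_congr
        intro s _
        exact Nat.not_even_iff_odd
      rw [this, Finset.sum_congr rfl (fun s hs => (Finset.mem_filter.1 hs).2.neg_one_pow)]
      simp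
    rw [h1, h2]
    ring
  have hED : (Finset.univ.filter fun s : Finset V =>
        ¬(∀ u ∈ s, ∀ v ∈ s, ¬ T.Adj u v) ∧ Even s.card)
      = D.filter (fun s => Even s.card) := by
    rw [hD, Finset.filter_filter, Finset.powerset_univ]
  have hOD : (Finset.univ.filter fun s : Finset V =>
        ¬(∀ u ∈ s, ∀ v ∈ s, ¬ T.Adj u v) ∧ Odd s.card)
      = D.filter (fun s => Odd s.card) := by
    rw [hD, Finset.filter_filter, Finset.powerset_univ]
  rw [hED, hOD, ← hDsum]
  have : ∑ s ∈ D, (-1 : ℤ) ^ s.card = - TreeDepAux.fA T Finset.univ := by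
    rw [hsplit] at htot
    linarith
  rw [this, abs_neg]
  exact TreeDepAux.abs_fA_le hacyc Finset.univ
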